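/- Let k be a commutative ring, L a Lie algebra over k which is finitely presented as a k-module, M an L-module, and K a commutative associative unital k-algebra which is faithfully flat as a k-module. Then IDer_k(L,M) = Der_k(L,M) if and only if IDer_K(L⊗_k K, M⊗_k K) = Der_K(L⊗_k K, M⊗_k K). -/

import Mathlib

open TensorProduct

section Aux

/-- The map `m ↦ (l ↦ ⁅l, m⁆)` as a linear map. -/
def betaMap (R L M : Type*) [CommRing R] [LieRing L] [LieAlgebra R L] [AddCommGroup M]
    [Module R M] [LieRingModule L M] [LieModule R L M] : M →ₗ[R] (L →ₗ[R] M) where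
  toFun m :=
    { toFun := fun l => ⁅l, m⁆
      map_add' := fun x y => add_lie x y m
      map_smul' := fun a x => smul_lie a x m }
  map_add' m n := LinearMap.ext fun l => lie_add l m n
  map_smul' a m := LinearMap.ext fun l => lie_smul a l m

@[simp] lemma betaMap_apply {R L M : Type*} [CommRing R] [LieRing L] [LieAlgebra R L]
    [AddCommGroup M] [Module R M] [LieRingModule L M] [LieModule R L M] (m : M) (l : L) :
    betaMap R L M m l = ⁅l, m⁆ := rfl

/-- The map sending `f` to the bilinear expression measuring the failure of `f` to be a
derivation. -/
def gammaMap (R L M : Type*) [CommRing R] [LieRing L] [LieAlgebra R L] [AddCommGroup M]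
    [Module R M] [LieRingModule L M] [LieModule R L M] :
    (L →ₗ[R] M) →ₗ[R] (L →ₗ[R] (L →ₗ[R] M)) where
  toFun f :=
    { toFun := fun x =>
        { toFun := fun y => f ⁅x, y⁆ - ⁅x, f y⁆ + ⁅y, f x⁆
          map_add' := fun y z => by
            simp only [lie_add, add_lie, map_add]; abel
          map_smul' := fun a y => by
            simp only [lie_smul, smul_lie, map_smul, RingHom.id_apply, smul_sub, smul_add] }
      map_add' := fun x z => by
        ext y
        simp only [add_lie, lie_add, map_add, LinearMap.coe_mk, AddHom.coe_mk,
          LinearMap.add_apply]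
        abel
      map_smul' := fun a x => by
        ext y
        simp only [smul_lie, lie_smul, map_smul, RingHom.id_apply, LinearMap.coe_mk,
          AddHom.coe_mk, LinearMap.smul_apply, smul_sub, smul_add] }
  map_add' f g := by
    ext x y
    simp only [LinearMap.add_apply, LinearMap.coe_mk, AddHom.coe_mk, lie_add]
    abel
  map_smul' a f := by
    ext x y
    simp only [LinearMap.smul_apply, LinearMap.coe_mk, AddHom.coe_mk, RingHom.id_apply,
      lie_smul, smul_sub, smul_add]

@[simp] lemma gammaMap_apply {R L M : Type*} [CommRing R] [LieRing L] [LieAlgebra R L]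
    [AddCommGroup M] [Module R M] [LieRingModule L M] [LieModule R L M]
    (f : L →ₗ[R] M) (x y : L) :
    gammaMap R L M f x y = f ⁅x, y⁆ - ⁅x, f y⁆ + ⁅y, f x⁆ := rfl

variable {R A : Type*} [CommRing R] [CommRing A] [Algebra R A]

lemma eta_tmul {P N : Type*} [AddCommGroup P] [Module R P] [AddCommGroup N] [Module R N]
    (a : A) (f : P →ₗ[R] N) (b : A) (x : P) :
    LinearMap.tensorProduct R A P N (a ⊗ₜ[R] f) (b ⊗ₜ[R] x) = (a * b) ⊗ₜ[R] f x := by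
  simp [LinearMap.tensorProduct, TensorProduct.smul_tmul']

lemma eta_natural {P P' N : Type*} [AddCommGroup P] [Module R P] [AddCommGroup P'] [Module R P']
    [AddCommGroup N] [Module R N] (φ : P' →ₗ[R] P) (t : A ⊗[R] (P →ₗ[R] N)) (u : A ⊗[R] P') :
    LinearMap.tensorProduct R A P' N ((LinearMap.lcomp R N φ).lTensor A t) u
      = LinearMap.tensorProduct R A P N t (φ.baseChange A u) := by
  induction t with
  | zero => simp
  | tmul a f =>
    induction u with
    | zero => simp
    | tmul b x =>
      simp only [LinearMap.lTensor_tmul, LinearMap.baseChange_tmul, eta_tmul]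
      rfl
    | add u v hu hv => simp only [map_add, hu, hv]
  | add t s ht hs => simp only [map_add, LinearMap.add_apply, ht, hs]

/-- The auxiliary maps `δᵢ : N →ₗ (Fin n → R) →ₗ N`. -/
def deltaMap (R : Type*) [CommRing R] {N : Type*} [AddCommGroup N] [Module R N]
    {n : ℕ} (i : Fin n) : N →ₗ[R] ((Fin n → R) →ₗ[R] N) where
  toFun m :=
    { toFun := fun v => v i • m
      map_add' := fun v w => by simp [add_smul]
      map_smul' := fun a v => by simp [mul_smul] }
  map_add' m m' := by ext v; simp [smul_add]
  map_smul' a m := LinearMap.ext fun v => smul_comm (v i) a m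

@[simp] lemma deltaMap_apply (R : Type*) [CommRing R] {N : Type*} [AddCommGroup N] [Module R N]
    {n : ℕ} (i : Fin n) (m : N) (v : Fin n → R) : deltaMap R i m v = v i • m := rfl

lemma eta_delta_key {N : Type*} [AddCommGroup N] [Module R N] {n : ℕ} (i j : Fin n)
    (s : A ⊗[R] N) :
    LinearMap.tensorProduct R A (Fin n → R) N ((deltaMap R i).lTensor A s)
      ((1 : A) ⊗ₜ[R] Pi.single j 1) = if i = j then s else 0 := by
  induction s with
  | zero => simp
  | tmul a m =>
    simp only [LinearMap.lTensor_tmul, eta_tmul, deltaMap_apply, mul_one]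
    by_cases h : i = j
    · subst h; rw [if_pos rfl, Pi.single_eq_same, one_smul]
    · rw [if_neg h, Pi.single_eq_of_ne h, zero_smul, TensorProduct.tmul_zero]
  | add s t hs ht =>
    rw [map_add, map_add, LinearMap.add_apply, hs, ht]
    by_cases h : i = j <;> simp [h]

lemma eta_pi_bijective (n : ℕ) (N : Type*) [AddCommGroup N] [Module R N] :
    Function.Bijective (LinearMap.tensorProduct R A (Fin n → R) N) := by
  classical
  set η := LinearMap.tensorProduct R A (Fin n → R) N with hη
  let Ξ : ((A ⊗[R] (Fin n → R)) →ₗ[A] A ⊗[R] N) → A ⊗[R] ((Fin n → R) →ₗ[R] N) :=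
    fun F => ∑ i : Fin n, (deltaMap R i).lTensor A (F ((1 : A) ⊗ₜ Pi.single i 1))
  have left : ∀ t, Ξ (η t) = t := by
    intro t
    induction t with
    | zero =>
      rw [map_zero]
      simp only [Ξ, LinearMap.zero_apply, map_zero, Finset.sum_const_zero]
    | tmul a f =>
      have : ∀ i : Fin n, η (a ⊗ₜ f) ((1 : A) ⊗ₜ Pi.single i 1)
          = a ⊗ₜ f (Pi.single i 1) := by
        intro i; rw [hη, eta_tmul, mul_one]
      simp only [Ξ, this, LinearMap.lTensor_tmul]
      rw [← TensorProduct.tmul_sum]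
      congr 1
      refine LinearMap.ext fun v => ?_
      simp only [LinearMap.coe_sum, Finset.sum_apply, deltaMap_apply]
      have hsingle : ∀ i : Fin n, (Pi.single i (1 : R) : Fin n → R)
          = fun j => if i = j then 1 else 0 := by
        intro i; ext j; simp [Pi.single_apply, eq_comm]
      simp only [hsingle]
      exact (LinearMap.pi_apply_eq_sum_univ f v).symm
    | add t s ht hs =>
      have : Ξ (η (t + s)) = Ξ (η t) + Ξ (η s) := by
        simp only [Ξ, map_add, LinearMap.add_apply]
        rw [← Finset.sum_add_distrib]
      rw [this, ht, hs]
  constructor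
  · exact Function.LeftInverse.injective left
  · intro F
    refine ⟨Ξ F, ?_⟩
    set G := η (Ξ F) with hG
    have hgen : ∀ j : Fin n, G ((1 : A) ⊗ₜ Pi.single j 1)
        = F ((1 : A) ⊗ₜ Pi.single j 1) := by
      intro j
      rw [hG]
      simp only [Ξ, map_sum, LinearMap.sum_apply]
      rw [Finset.sum_congr rfl (fun i _ => eta_delta_key i j (F ((1 : A) ⊗ₜ Pi.single i 1)))]
      simp
    apply LinearMap.ext
    intro u
    induction u with
    | zero => simp
    | tmul b v =>
      have hb : ∀ (x : Fin n → R), b ⊗ₜ[R] x = b • ((1 : A) ⊗ₜ[R] x) := fun x => by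
        rw [TensorProduct.smul_tmul', smul_eq_mul, mul_one]
      have hv : b ⊗ₜ[R] v = ∑ i : Fin n,
          (algebraMap R A (v i) * b) • ((1 : A) ⊗ₜ[R] (Pi.single i (1 : R) : Fin n → R)) := by
        have hv0 : v = ∑ i : Fin n, v i • (Pi.single i (1 : R) : Fin n → R) := by
          ext j
          simp [Pi.single_apply]
        conv_lhs => rw [hv0]
        rw [TensorProduct.tmul_sum]
        refine Finset.sum_congr rfl fun i _ => ?_
        rw [TensorProduct.tmul_smul, ← algebraMap_smul A (v i), hb, smul_smul]
      rw [hv, map_sum, map_sum]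
      refine Finset.sum_congr rfl fun i _ => ?_
      rw [map_smul, map_smul, hgen]
    | add u v hu hv => rw [map_add, map_add, hu, hv]

lemma eta_bijective {P : Type*} [AddCommGroup P] [Module R P] [Module.FinitePresentation R P]
    [Module.Flat R A] (N : Type*) [AddCommGroup N] [Module R N] :
    Function.Bijective (LinearMap.tensorProduct R A P N) := by
  classical
  obtain ⟨n, f, hf⟩ := Module.Finite.exists_fin' R P
  obtain ⟨m, s, hs⟩ := Submodule.fg_iff_exists_fin_generating_family.mp
    (Module.FinitePresentation.fg_ker f hf)
  set g : (Fin m → R) →ₗ[R] (Fin n → R) := Fintype.linearCombination R s with hg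
  have hrg : LinearMap.range g = LinearMap.ker f := by
    rw [hg, Fintype.range_linearCombination, hs]
  have hfg : f ∘ₗ g = 0 := by
    refine LinearMap.ext fun x => ?_
    show f (g x) = 0
    have : g x ∈ LinearMap.ker f := hrg ▸ LinearMap.mem_range_self g x
    exact this
  set fstar : (P →ₗ[R] N) →ₗ[R] ((Fin n → R) →ₗ[R] N) := LinearMap.lcomp R N f with hfstar
  set gstar : ((Fin n → R) →ₗ[R] N) →ₗ[R] ((Fin m → R) →ₗ[R] N) :=
    LinearMap.lcomp R N g with hgstar
  have hfstar_inj : Function.Injective fstar := by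
    intro h₁ h₂ e
    ext p
    obtain ⟨x, rfl⟩ := hf p
    exact LinearMap.congr_fun e x
  have hexact : Function.Exact fstar gstar := by
    rw [LinearMap.exact_iff]
    apply le_antisymm
    · rintro h hker
      have hle : LinearMap.ker f ≤ LinearMap.ker h := by
        rw [← hrg]
        rintro x ⟨y, rfl⟩
        exact LinearMap.congr_fun hker y
      set e := f.quotKerEquivOfSurjective hf with he
      refine ⟨(Submodule.liftQ (LinearMap.ker f) h hle) ∘ₗ e.symm.toLinearMap, ?_⟩
      refine LinearMap.ext fun x => ?_
      have hex : e.symm (f x) = Submodule.Quotient.mk x := by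
        apply e.injective
        rw [LinearEquiv.apply_symm_apply]
        rw [he]
        simp [LinearMap.quotKerEquivOfSurjective, LinearMap.quotKerEquivRange]
      show (Submodule.liftQ (LinearMap.ker f) h hle) (e.symm (f x)) = h x
      rw [hex]
      exact Submodule.liftQ_apply _ h x
    · rintro h ⟨h', rfl⟩
      have : gstar (fstar h') = h' ∘ₗ (f ∘ₗ g) := rfl
      simp only [LinearMap.mem_ker, this, hfg, LinearMap.comp_zero]
  constructor
  · intro t₁ t₂ e
    apply (Module.Flat.lTensor_preserves_injective_linearMap (M := A) fstar hfstar_inj)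
    apply (eta_pi_bijective n N).injective
    refine LinearMap.ext fun u => ?_
    rw [eta_natural, eta_natural, e]
  · intro D
    obtain ⟨s₁, hs₁⟩ := (eta_pi_bijective n N).surjective (D ∘ₗ f.baseChange A)
    have hgs : gstar.lTensor A s₁ = 0 := by
      apply (eta_pi_bijective m N).injective
      refine LinearMap.ext fun u => ?_
      rw [eta_natural, hs₁, map_zero, LinearMap.zero_apply]
      simp only [LinearMap.comp_apply]
      have : f.baseChange A (g.baseChange A u) = (f ∘ₗ g).baseChange A u := by
        rw [LinearMap.baseChange_comp]; rfl
      rw [this, hfg]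
      simp
    obtain ⟨t, ht⟩ := (Module.Flat.lTensor_exact A hexact s₁).mp hgs
    refine ⟨t, ?_⟩
    refine LinearMap.ext fun u => ?_
    obtain ⟨w, rfl⟩ := LinearMap.lTensor_surjective A hf u
    have hbc : f.lTensor A w = f.baseChange A w := rfl
    rw [hbc, ← eta_natural, ht, hs₁]
    rfl

end Aux

set_option maxHeartbeats 1000000 in
/-- Let `L` be a Lie algebra over `k` which is finitely presented
as a `k`-module, `M` an `L`-module, and `K` a commutative `k`-algebra which is
faithfully flat as a `k`-module.  Then every `k`-linear derivation `L → M` is inner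
if and only if every `K`-linear derivation `L ⊗[k] K → M ⊗[k] K` is inner.  Here
`K ⊗[k] L` and `K ⊗[k] M` carry the base-changed Lie algebra and Lie module
structures, with `⁅x ⊗ l, y ⊗ m⁆ = (x*y) ⊗ ⁅l,m⁆`. -/
theorem stmt_4 {k L M K : Type*} [CommRing k] [LieRing L] [LieAlgebra k L]
    [AddCommGroup M] [Module k M] [LieRingModule L M] [LieModule k L M]
    [CommRing K] [Algebra k K]
    [Module.FinitePresentation k L] [Module.FaithfullyFlat k K] :
    (∀ d : L →ₗ[k] M, (∀ x y : L, d ⁅x, y⁆ = ⁅x, d y⁆ - ⁅y, d x⁆) →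
        ∃ m : M, ∀ l : L, d l = ⁅l, m⁆) ↔
      (∀ D : (K ⊗[k] L) →ₗ[K] (K ⊗[k] M),
        (∀ u v : K ⊗[k] L, D ⁅u, v⁆ = ⁅u, D v⁆ - ⁅v, D u⁆) →
          ∃ n : K ⊗[k] M, ∀ u : K ⊗[k] L, D u = ⁅u, n⁆) := by
  classical
  set β := betaMap k L M with hβ
  set γ := gammaMap k L M with hγ
  set γK := gammaMap K (K ⊗[k] L) (K ⊗[k] M) with hγK
  set ηM := LinearMap.tensorProduct k K L M with hηM
  set ηH := LinearMap.tensorProduct k K L (L →ₗ[k] M) with hηH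
  have hηMb : Function.Bijective ηM := eta_bijective M
  have hηHb : Function.Bijective ηH := eta_bijective (L →ₗ[k] M)
  -- compatibility of `β` with base change
  have hP1 : ∀ (t : K ⊗[k] M) (u : K ⊗[k] L), ηM (β.lTensor K t) u = ⁅u, t⁆ := by
    intro t u
    induction t with
    | zero => simp
    | tmul a mm =>
      induction u with
      | zero => exact (zero_lie _).symm
      | tmul b l =>
        rw [LinearMap.lTensor_tmul, hηM, eta_tmul]
        simp only [betaMap_apply, LieAlgebra.ExtendScalars.bracket_tmul]
        rw [mul_comm]
        rfl
      | add u v hu hv => rw [map_add, hu, hv]; exact (add_lie u v _).symm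
    | add t s ht hs =>
      rw [map_add, map_add, LinearMap.add_apply, ht, hs, lie_add]
  -- compatibility of `γ` with base change
  have hP2 : ∀ (t : K ⊗[k] (L →ₗ[k] M)) (u v : K ⊗[k] L),
      ηM (ηH (γ.lTensor K t) u) v = γK (ηM t) u v := by
    intro t u v
    induction t with
    | zero => simp
    | tmul a f =>
      induction u with
      | zero => simp
      | tmul b x =>
        induction v with
        | zero => simp
        | tmul c y =>
          rw [hγ, hγK, hηH, hηM]
          rw [LinearMap.lTensor_tmul, eta_tmul, eta_tmul]
          simp only [gammaMap_apply, LieAlgebra.ExtendScalars.bracket_tmul, eta_tmul,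
            TensorProduct.tmul_sub, TensorProduct.tmul_add, map_sub, map_add]
          ring_nf
        | add v₁ v₂ h₁ h₂ => simp only [map_add, LinearMap.add_apply, h₁, h₂]
      | add u₁ u₂ h₁ h₂ => simp only [map_add, LinearMap.add_apply, h₁, h₂]
    | add t₁ t₂ h₁ h₂ => simp only [map_add, LinearMap.add_apply, h₁, h₂]
  constructor
  · -- forward direction
    intro H D hD
    have hexact : Function.Exact β γ := by
      rw [LinearMap.exact_iff]
      apply le_antisymm
      · intro d hd
        have hder : ∀ x y : L, d ⁅x, y⁆ = ⁅x, d y⁆ - ⁅y, d x⁆ := by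
          intro x y
          have h0 := LinearMap.congr_fun (LinearMap.congr_fun (LinearMap.mem_ker.mp hd) x) y
          rw [hγ] at h0
          rw [LinearMap.zero_apply, LinearMap.zero_apply, gammaMap_apply,
            sub_add_eq_add_sub, sub_eq_zero] at h0
          rw [eq_sub_iff_add_eq]
          exact h0
        obtain ⟨mm, hm⟩ := H d hder
        exact ⟨mm, by ext l; exact (hm l).symm⟩
      · rintro d ⟨mm, rfl⟩
        rw [LinearMap.mem_ker]
        ext x y
        simp only [hβ, hγ, gammaMap_apply, betaMap_apply, LinearMap.zero_apply]
        rw [lie_lie]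
        abel
    obtain ⟨t, ht⟩ := hηMb.surjective D
    have hγKD : ∀ u v, γK D u v = 0 := by
      intro u v
      rw [hγK, gammaMap_apply, hD u v]
      abel
    have hγt : γ.lTensor K t = 0 := by
      apply hηHb.injective
      refine LinearMap.ext fun u => ?_
      apply hηMb.injective
      refine LinearMap.ext fun v => ?_
      rw [hP2, ht, hγKD u v, map_zero, LinearMap.zero_apply, map_zero, LinearMap.zero_apply]
    obtain ⟨n, hn⟩ := (Module.Flat.lTensor_exact K hexact t).mp hγt
    refine ⟨n, fun u => ?_⟩
    rw [← ht, ← hn, hP1]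
  · -- backward direction
    intro H d hd
    set D := ηM ((1 : K) ⊗ₜ d) with hD
    have hγd : γ d = 0 := by
      ext x y
      rw [gammaMap_apply, hd x y, LinearMap.zero_apply, LinearMap.zero_apply]
      abel
    have hDder : ∀ u v, D ⁅u, v⁆ = ⁅u, D v⁆ - ⁅v, D u⁆ := by
      intro u v
      have h0 : γK D u v = 0 := by
        rw [hD, ← hP2, LinearMap.lTensor_tmul, hγd, TensorProduct.tmul_zero, map_zero,
          LinearMap.zero_apply, map_zero, LinearMap.zero_apply]
      rw [hγK, gammaMap_apply, sub_add_eq_add_sub, sub_eq_zero] at h0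
      rw [eq_sub_iff_add_eq]
      exact h0
    obtain ⟨n, hn⟩ := H D hDder
    have h2 : β.lTensor K n = (1 : K) ⊗ₜ d := by
      apply hηMb.injective
      refine LinearMap.ext fun u => ?_
      rw [hP1, ← hD]
      exact (hn u).symm
    set q := (LinearMap.range β).mkQ with hq
    have hqβ : q ∘ₗ β = 0 := by
      ext mm
      exact (Submodule.Quotient.mk_eq_zero _).mpr ⟨mm, rfl⟩
    have hq0 : (1 : K) ⊗ₜ[k] (q d) = 0 := by
      have h3 : q.lTensor K ((1 : K) ⊗ₜ d) = 0 := by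
        rw [← h2, ← LinearMap.lTensor_comp_apply, hqβ, LinearMap.lTensor_zero,
          LinearMap.zero_apply]
      simpa using h3
    have hqd : q d = 0 := by
      have hmap : (LinearMap.toSpanSingleton k ((L →ₗ[k] M) ⧸ LinearMap.range (betaMap k L M)) (q d)).lTensor K = 0 := by
        refine LinearMap.ext fun z => ?_
        rw [LinearMap.zero_apply]
        induction z with
        | zero => simp
        | tmul a c =>
          rw [LinearMap.lTensor_tmul, LinearMap.toSpanSingleton_apply,
            TensorProduct.tmul_smul,
            show a ⊗ₜ[k] (q d) = a • ((1 : K) ⊗ₜ[k] (q d)) from by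
              rw [TensorProduct.smul_tmul', smul_eq_mul, mul_one],
            hq0, smul_zero, smul_zero]
        | add z₁ z₂ h₁ h₂ => rw [map_add, h₁, h₂, add_zero]
      have := (Module.FaithfullyFlat.zero_iff_lTensor_zero (R := k) (M := K)
        (LinearMap.toSpanSingleton k ((L →ₗ[k] M) ⧸ LinearMap.range (betaMap k L M)) (q d))).mpr hmap
      simpa using LinearMap.congr_fun this 1
    have hmem : d ∈ LinearMap.range β := by
      rw [hq, Submodule.mkQ_apply] at hqd
      exact (Submodule.Quotient.mk_eq_zero _).mp hqd
    obtain ⟨mm, hm⟩ := hmem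
    exact ⟨mm, fun l => by rw [← hm]; rfl⟩
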